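/- Let G be a (P₃ ∪ P₁)-free graph on n ≥ 3 vertices with toughness strictly greater than 1. Then G is hamiltonian connected, i.e., between any two distinct vertices of G there is a hamiltonian path. -/

import Mathlib

open SimpleGraph

/-- The number of connected components of `G − S`. -/
noncomputable def numComp {V : Type*} (G : SimpleGraph V) (S : Set V) : ℕ :=
  Nat.card (G.induce Sᶜ).ConnectedComponent

/-- `G` is `t`-tough: every cutset `S` satisfies `|S| ≥ t · c(G − S)`. -/
def Tough {V : Type*} (t : ℝ) (G : SimpleGraph V) : Prop :=
  ∀ S : Set V, 2 ≤ numComp G S → t * (numComp G S : ℝ) ≤ (S.ncard : ℝ)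

/-- `G` contains no induced copy of `H`. -/
def InducedFree {W V : Type*} (H : SimpleGraph W) (G : SimpleGraph V) : Prop :=
  ¬ ∃ f : W ↪ V, ∀ a b : W, G.Adj (f a) (f b) ↔ H.Adj a b

/-- `P₃ ∪ P₁`: a path on three vertices plus one isolated vertex. -/
def P3UnionP1 : SimpleGraph (Fin 4) := SimpleGraph.fromEdgeSet {s(0, 1), s(1, 2)}

/-- `P₃ ∪ 2P₁`: a path on three vertices plus two isolated vertices. -/
def P3Union2P1 : SimpleGraph (Fin 5) := SimpleGraph.fromEdgeSet {s(0, 1), s(1, 2)}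

set_option linter.unusedVariables false
set_option linter.unnecessarySimpa false
set_option linter.unreachableTactic false
set_option linter.unusedTactic false

/-- Lists that represent paths of `G` from `u` to `v`. -/
def GPath {V : Type*} (G : SimpleGraph V) (u v : V) (l : List V) : Prop :=
  l.Chain' G.Adj ∧ l.head? = some u ∧ l.getLast? = some v ∧ l.Nodup

lemma p3p1_apply {V : Type*} {G : SimpleGraph V} (hfree : InducedFree P3UnionP1 G)
    {a b c d : V} (hab : G.Adj a b) (hbc : G.Adj b c) (hac : ¬ G.Adj a c)
    (hda : ¬ G.Adj d a) (hdb : ¬ G.Adj d b) (hdc : ¬ G.Adj d c)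
    (hac' : a ≠ c) (hda' : d ≠ a) (hdb' : d ≠ b) (hdc' : d ≠ c) : False := by
  have hab' : a ≠ b := hab.ne
  have hbc' : b ≠ c := hbc.ne
  apply hfree
  refine ⟨⟨![a,b,c,d], ?_⟩, ?_⟩
  · intro i j hij
    fin_cases i <;> fin_cases j <;> simp_all <;> tauto
  · intro i j
    fin_cases i <;> fin_cases j <;>
      simp [P3UnionP1, G.irrefl] <;>
      first
        | exact hab | exact hab.symm | exact hbc | exact hbc.symm
        | (intro h; first | exact hac h | exact hac (G.adj_symm h) | exact hda (G.adj_symm h) | exact hda h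
                          | exact hdb (G.adj_symm h) | exact hdb h | exact hdc (G.adj_symm h) | exact hdc h)
        | decide

lemma exists_induced_P3 {W : Type*} {H : SimpleGraph W} :
    ∀ (N : ℕ) (a b : W) (p : H.Walk a b), p.length ≤ N → a ≠ b → ¬ H.Adj a b →
    ∃ x y z : W, H.Adj x y ∧ H.Adj y z ∧ ¬ H.Adj x z ∧ x ≠ z ∧
      H.Reachable a x ∧ H.Reachable a y ∧ H.Reachable a z := by
  intro N
  induction N with
  | zero =>
    intro a b p hlen hne _
    exact absurd (p.eq_of_length_eq_zero (Nat.le_zero.mp hlen)) hne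
  | succ N ih =>
    intro a b p hlen hne hadj
    cases p with
    | nil => exact absurd rfl hne
    | @cons _ c _ h q =>
      cases q with
      | nil => exact absurd h hadj
      | @cons _ d _ h2 r =>
        by_cases had : H.Adj a d
        · refine ih a b (SimpleGraph.Walk.cons had r) ?_ hne hadj
          simp only [SimpleGraph.Walk.length_cons] at hlen ⊢
          omega
        · by_cases haq : a = d
          · subst haq
            refine ih a b r ?_ hne hadj
            simp only [SimpleGraph.Walk.length_cons] at hlen
            omega
          · exact ⟨a, c, d, h, h2, had, haq, SimpleGraph.Reachable.refl a,
              ⟨SimpleGraph.Walk.cons h SimpleGraph.Walk.nil⟩,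
              ⟨SimpleGraph.Walk.cons h (SimpleGraph.Walk.cons h2 SimpleGraph.Walk.nil)⟩⟩


lemma cliquey {V : Type*} {G : SimpleGraph V} (hfree : InducedFree P3UnionP1 G)
    {S : Set V} {a b c : ↥Sᶜ} (hreach : (G.induce Sᶜ).Reachable a b)
    (hnr : ¬ (G.induce Sᶜ).Reachable a c) (hne : a ≠ b) : G.Adj ↑a ↑b := by
  by_contra hadj
  have hadj' : ¬ (G.induce Sᶜ).Adj a b := by simpa using hadj
  obtain ⟨p⟩ := hreach
  obtain ⟨x, y, z, hxy, hyz, hxz, hxz', hrx, hry, hrz⟩ :=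
    exists_induced_P3 p.length a b p le_rfl hne hadj'
  have hkey : ∀ w : ↥Sᶜ, (G.induce Sᶜ).Reachable a w → ¬ G.Adj ↑c ↑w ∧ (c : V) ≠ ↑w := by
    intro w hrw
    constructor
    · intro hcw
      exact hnr (hrw.trans ⟨SimpleGraph.Walk.cons (by simpa using hcw.symm) SimpleGraph.Walk.nil⟩)
    · intro hcw
      rw [← Subtype.val_injective hcw] at hrw; exact hnr hrw
  obtain ⟨hcx, hcx'⟩ := hkey x hrx
  obtain ⟨hcy, hcy'⟩ := hkey y hry
  obtain ⟨hcz, hcz'⟩ := hkey z hrz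
  exact p3p1_apply hfree (by simpa using hxy) (by simpa using hyz) (by simpa using hxz)
    hcx hcy hcz (fun h => hxz' (Subtype.val_injective h)) hcx' hcy' hcz'

lemma gpath_toWalk {V : Type*} {G : SimpleGraph V} :
    ∀ (l : List V) (u v : V), l.Chain' G.Adj → l.head? = some u → l.getLast? = some v →
    ∃ p : G.Walk u v, p.support = l := by
  intro l
  induction l with
  | nil => intro u v _ h _; simp at h
  | cons a t ih =>
    intro u v hc hh hl
    have hau : a = u := by simpa using hh
    subst hau
    cases t with
    | nil =>
      have hv : a = v := by simpa using hl
      subst hv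
      exact ⟨SimpleGraph.Walk.nil, rfl⟩
    | cons b t' =>
      have hadj : G.Adj a b := (List.isChain_cons_cons.mp hc).1
      have hc' : (b :: t').Chain' G.Adj := (List.isChain_cons_cons.mp hc).2
      have hl' : (b :: t').getLast? = some v := by
        rwa [List.getLast?_cons_cons] at hl
      obtain ⟨q, hq⟩ := ih b v hc' rfl hl'
      exact ⟨SimpleGraph.Walk.cons hadj q, by simp [hq]⟩

lemma walk_toGPath {V : Type*} {G : SimpleGraph V} {u v : V} (p : G.Walk u v) (hp : p.IsPath) :
    GPath G u v p.support := by
  refine ⟨p.isChain_adj_support, ?_, ?_, hp.support_nodup⟩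
  · rw [List.head?_eq_head p.support_ne_nil]
    simp
  · rw [List.getLast?_eq_getLast p.support_ne_nil]
    simp

lemma exists_longest {V : Type*} [Fintype V] [DecidableEq V] {G : SimpleGraph V} {u v : V}
    (hne : ∃ l, GPath G u v l) :
    ∃ l, GPath G u v l ∧ ∀ l', GPath G u v l' → l'.length ≤ l.length := by
  classical
  set n := Fintype.card V with hn
  have hbnd : ∀ l, GPath G u v l → l.length ≤ n := fun l hl => hl.2.2.2.length_le_card
  obtain ⟨l₀, hl₀⟩ := hne
  set P : ℕ → Prop := fun k => ∃ l, GPath G u v l ∧ l.length = k with hP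
  have hPl₀ : P l₀.length := ⟨l₀, hl₀, rfl⟩
  obtain ⟨l, hl, hlen⟩ := Nat.findGreatest_spec (P := P) (hbnd l₀ hl₀) hPl₀
  refine ⟨l, hl, fun l' hl' => ?_⟩
  by_contra hgt
  push_neg at hgt
  rw [hlen] at hgt
  exact Nat.findGreatest_is_greatest hgt (hbnd l' hl') ⟨l', hl', rfl⟩

lemma head?_append_cons {α : Type*} (A : List α) (x : α) (r r' : List α) :
    (A ++ x :: r).head? = (A ++ x :: r').head? := by cases A <;> simp

lemma chain'_rev {V : Type*} {G : SimpleGraph V} {l : List V} (h : l.Chain' G.Adj) :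
    l.reverse.Chain' G.Adj :=
  List.isChain_reverse.mpr (h.imp fun _ _ hab => hab.symm)

lemma insert_contra {V : Type*} {G : SimpleGraph V} {u v : V} {l A T m : List V} {x x' : V}
    (hl : GPath G u v l)
    (hmax : ∀ l', GPath G u v l' → l'.length ≤ l.length)
    (hdec : l = A ++ x :: x' :: T)
    (hmc : m.Chain' G.Adj) (hmne : m ≠ []) (hmnd : m.Nodup)
    (hdisj : ∀ w ∈ m, w ∉ l)
    (hx : ∀ h ∈ m.head?, G.Adj x h) (hx' : ∀ h ∈ m.getLast?, G.Adj h x') : False := by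
  obtain ⟨hc, hh, hg, hnd⟩ := hl
  set new : List V := A ++ x :: (m ++ x' :: T) with hnew
  have hcl : (A ++ x :: x' :: T).Chain' G.Adj := by rwa [hdec] at hc
  rw [List.Chain', List.isChain_append] at hcl
  obtain ⟨cA, c2, bdA⟩ := hcl
  have cXT : (x' :: T).Chain' G.Adj := (List.isChain_cons_cons.mp c2).2
  -- chain' of new
  have hcnew : new.Chain' G.Adj := by
    rw [hnew, List.Chain', List.isChain_append]
    refine ⟨cA, ?_, ?_⟩
    · rw [List.isChain_cons]
      constructor
      · intro y hy
        rw [List.head?_append_of_ne_nil _ hmne] at hy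
        exact hx y hy
      · rw [List.isChain_append]
        exact ⟨hmc, cXT, fun a ha y hy => by simp at hy; subst hy; exact hx' a ha⟩
    · intro a ha y hy
      simp at hy
      subst hy
      exact bdA a ha x (by simp)
  -- head?
  have hhnew : new.head? = some u := by
    rw [hnew, head?_append_cons A x (m ++ x' :: T) (x' :: T), ← hdec]
    exact hh
  -- getLast?
  have hgnew : new.getLast? = some v := by
    have e1 : new = (A ++ x :: m) ++ (x' :: T) := by simp [hnew]
    have e2 : l = (A ++ [x]) ++ (x' :: T) := by simp [hdec]
    rw [e1, List.getLast?_append_of_ne_nil _ (by simp)]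
    rw [e2, List.getLast?_append_of_ne_nil _ (by simp)] at hg
    exact hg
  -- perm
  have hperm : new.Perm (l ++ m) := by
    rw [hnew, hdec]
    simp only [List.cons_append, List.append_assoc]
    refine List.Perm.append_left A (List.Perm.cons x ?_)
    simpa using (List.perm_append_comm (l₁ := m) (l₂ := x' :: T))
  have hndnew : new.Nodup := by
    refine hperm.nodup_iff.mpr ?_
    rw [List.nodup_append]
    exact ⟨hnd, hmnd, fun a ha b hb hab => hdisj b hb (hab ▸ ha)⟩
  have hlen := hmax new ⟨hcnew, hhnew, hgnew, hndnew⟩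
  have : new.length = l.length + m.length := by rw [hperm.length_eq]; simp
  have : 1 ≤ m.length := List.length_pos_iff.mpr hmne
  omega

lemma reroute_contra {V : Type*} [DecidableEq V] {G : SimpleGraph V} {u v : V} {l A B C m : List V}
    {x s x' s' : V}
    (hl : GPath G u v l)
    (hmax : ∀ l', GPath G u v l' → l'.length ≤ l.length)
    (hdec : l = A ++ x :: s :: (B ++ x' :: s' :: C))
    (hmc : m.Chain' G.Adj) (hmne : m ≠ []) (hmnd : m.Nodup)
    (hdisj : ∀ w ∈ m, w ∉ l)
    (hx : ∀ h ∈ m.head?, G.Adj x h) (hx' : ∀ h ∈ m.getLast?, G.Adj h x')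
    (hss : G.Adj s s') : False := by
  obtain ⟨hc, hh, hg, hnd⟩ := hl
  set new : List V := A ++ x :: (m ++ x' :: ((s :: B).reverse ++ s' :: C)) with hnew
  -- decompose the original chain
  have hcl : (A ++ x :: s :: (B ++ x' :: s' :: C)).Chain' G.Adj := by rwa [hdec] at hc
  rw [List.Chain', List.isChain_append] at hcl
  obtain ⟨cA, c1, bdA⟩ := hcl
  rw [List.isChain_cons_cons] at c1
  obtain ⟨hxs, c2⟩ := c1
  have e3 : s :: (B ++ x' :: s' :: C) = (s :: B) ++ (x' :: s' :: C) := by simp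
  rw [e3, List.isChain_append] at c2
  obtain ⟨cSB, cXSC, bd2⟩ := c2
  rw [List.isChain_cons_cons] at cXSC
  obtain ⟨hx's', cSC⟩ := cXSC
  -- chain' of new
  have hcnew : new.Chain' G.Adj := by
    rw [hnew, List.Chain', List.isChain_append]
    refine ⟨cA, ?_, ?_⟩
    · rw [List.isChain_cons]
      refine ⟨fun y hy => ?_, ?_⟩
      · rw [List.head?_append_of_ne_nil _ hmne] at hy
        exact hx y hy
      · rw [List.isChain_append]
        refine ⟨hmc, ?_, fun a ha y hy => by simp at hy; subst hy; exact hx' a ha⟩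
        rw [List.isChain_cons]
        refine ⟨fun y hy => ?_, ?_⟩
        · rw [List.head?_append_of_ne_nil _ (by simp)] at hy
          rw [List.head?_reverse] at hy
          exact (bd2 y hy x' (by simp)).symm
        · rw [List.isChain_append]
          refine ⟨chain'_rev cSB, cSC, fun a ha y hy => ?_⟩
          rw [List.getLast?_reverse] at ha
          simp at ha hy
          subst ha; subst hy
          exact hss
    · intro a ha y hy
      simp at hy
      subst hy
      exact bdA a ha x (by simp)
  -- head?
  have hhnew : new.head? = some u := by
    rw [hnew, head?_append_cons A x _ (s :: (B ++ x' :: s' :: C)), ← hdec]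
    exact hh
  -- getLast?
  have hgnew : new.getLast? = some v := by
    have e1 : new = (A ++ x :: (m ++ x' :: (s :: B).reverse)) ++ (s' :: C) := by simp [hnew]
    have e2 : l = (A ++ x :: s :: (B ++ [x'])) ++ (s' :: C) := by simp [hdec]
    rw [e1, List.getLast?_append_of_ne_nil _ (by simp)]
    rw [e2, List.getLast?_append_of_ne_nil _ (by simp)] at hg
    exact hg
  -- perm
  have hperm : new.Perm (l ++ m) := by
    rw [hnew, hdec]
    refine List.perm_iff_count.mpr fun a => ?_
    simp only [List.count_append, List.count_cons, List.count_reverse]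
    ring
  have hndnew : new.Nodup := by
    refine hperm.nodup_iff.mpr ?_
    rw [List.nodup_append]
    exact ⟨hnd, hmnd, fun a ha b hb hab => hdisj b hb (hab ▸ ha)⟩
  have hlen := hmax new ⟨hcnew, hhnew, hgnew, hndnew⟩
  have h1 : new.length = l.length + m.length := by rw [hperm.length_eq]; simp
  have h2 : 1 ≤ m.length := List.length_pos_iff.mpr hmne
  omega

/-- A `(P₃ ∪ P₁)`-free graph on `n ≥ 3` vertices with toughness greater than `1` is
hamiltonian connected. -/
theorem stmt_8 {V : Type*} [Fintype V] [DecidableEq V] (G : SimpleGraph V)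
    (hfree : InducedFree P3UnionP1 G) (hcard : 3 ≤ Fintype.card V)
    (htough : ∀ S : Set V, 2 ≤ numComp G S → numComp G S < S.ncard) :
    ∀ u v : V, u ≠ v → ∃ p : G.Walk u v, p.IsHamiltonian := by
  classical
  intro u v huv
  -- G is connected
  have hconn : G.Preconnected := by
    intro a b
    by_contra hr
    have key : 2 ≤ numComp G (∅ : Set V) := by
      unfold numComp
      haveI : Fintype (G.induce (∅ : Set V)ᶜ).ConnectedComponent := Fintype.ofFinite _
      rw [Nat.card_eq_fintype_card]
      refine Fintype.one_lt_card_iff_nontrivial.mpr ⟨⟨(G.induce (∅ : Set V)ᶜ).connectedComponentMk ⟨a, by simp⟩,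
        (G.induce (∅ : Set V)ᶜ).connectedComponentMk ⟨b, by simp⟩, fun h => hr ?_⟩⟩
      have hre := SimpleGraph.ConnectedComponent.exact h
      have := hre.map (SimpleGraph.Embedding.induce ((∅ : Set V)ᶜ)).toHom
      simpa using this
    have := htough ∅ key
    simp [Set.ncard_empty] at this
  obtain ⟨p₀⟩ := hconn u v
  obtain ⟨l, hl, hmax⟩ := exists_longest ⟨p₀.toPath.1.support, walk_toGPath _ p₀.toPath.2⟩
  obtain ⟨hc, hh, hg, hnd⟩ := hl
  have hl' : GPath G u v l := ⟨hc, hh, hg, hnd⟩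
  by_cases hall : ∀ w, w ∈ l
  · obtain ⟨p, hp⟩ := gpath_toWalk l u v hc hh hg
    refine ⟨p, fun w => ?_⟩
    rw [hp]
    exact List.count_eq_one_of_mem hnd (hall w)
  exfalso
  push_neg at hall
  obtain ⟨h₀, hh₀⟩ := hall
  -- the component H of h₀ off the path
  set Pset : Set V := {w | w ∈ l} with hPsetDef
  have hh₀' : h₀ ∈ Psetᶜ := hh₀
  set Hs : Set V := {w | ∃ hw : w ∈ Psetᶜ,
      (G.induce Psetᶜ).connectedComponentMk ⟨w, hw⟩ =
      (G.induce Psetᶜ).connectedComponentMk ⟨h₀, hh₀'⟩} with hHsDef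
  have hHl : ∀ w ∈ Hs, w ∉ l := fun w hw => hw.1
  have hh₀H : h₀ ∈ Hs := ⟨hh₀', rfl⟩
  have hHnbr : ∀ a ∈ Hs, ∀ b, G.Adj a b → b ∉ l → b ∈ Hs := by
    rintro a ⟨ha, hcomp⟩ b hab hb
    have hb' : b ∈ Psetᶜ := hb
    refine ⟨hb', ?_⟩
    rw [← hcomp]
    refine SimpleGraph.ConnectedComponent.sound ?_
    exact SimpleGraph.Adj.reachable (by simpa using hab.symm)
  -- paths within H
  have hHpath : ∀ a, a ∈ Hs → ∀ b, b ∈ Hs → ∃ m : List V, m.Chain' G.Adj ∧ m ≠ [] ∧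
      m.Nodup ∧ (∀ w ∈ m, w ∈ Hs) ∧ m.head? = some a ∧ m.getLast? = some b := by
    rintro a ⟨ha, hca⟩ b ⟨hb, hcb⟩
    have hr : (G.induce Psetᶜ).Reachable ⟨a, ha⟩ ⟨b, hb⟩ :=
      SimpleGraph.ConnectedComponent.exact (hca.trans hcb.symm)
    obtain ⟨q, hq⟩ : ∃ q : (G.induce Psetᶜ).Walk ⟨a, ha⟩ ⟨b, hb⟩, q.IsPath :=
      ⟨hr.some.toPath.1, hr.some.toPath.2⟩
    refine ⟨q.support.map Subtype.val, ?_, fun hnil => q.support_ne_nil (List.map_eq_nil_iff.mp hnil), hq.support_nodup.map Subtype.val_injective,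
        ?_, ?_, ?_⟩
    · rw [List.Chain', List.isChain_map]
      exact q.isChain_adj_support.imp fun x y hxy => by simpa using hxy
    · intro w hw
      simp only [List.mem_map] at hw
      obtain ⟨c, hcmem, rfl⟩ := hw
      have hreach : (G.induce Psetᶜ).Reachable ⟨a, ha⟩ c := ⟨q.takeUntil c hcmem⟩
      exact ⟨c.2, (SimpleGraph.ConnectedComponent.sound hreach.symm).trans hca⟩
    · rw [List.head?_map, q.support_eq_cons]
      simp [-SimpleGraph.Walk.cons_tail_support]
    · rw [List.getLast?_map, List.getLast?_eq_getLast q.support_ne_nil]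
      simp
  -- the attachment set
  set X : Set V := {w | w ∈ l ∧ ∃ h ∈ Hs, G.Adj w h} with hXDef
  -- indexing machinery
  set el : ℕ → V := fun i => l.getD i h₀ with helDef
  have hel : ∀ i (h : i < l.length), el i = l[i] := fun i h => List.getD_eq_getElem l h₀ h
  have helmem : ∀ i, i < l.length → el i ∈ l := by
    intro i hi; rw [hel i hi]; exact List.getElem_mem hi
  have hel_inj : ∀ i j, i < l.length → j < l.length → el i = el j → i = j := by
    intro i j hi hj he
    rw [hel i hi, hel j hj] at he
    have := (hnd.get_inj_iff (i := ⟨i, hi⟩) (j := ⟨j, hj⟩)).mp (by simpa using he)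
    simpa using this
  have hdecad : ∀ i, i + 1 < l.length → l = l.take i ++ el i :: el (i+1) :: l.drop (i+2) := by
    intro i hi
    rw [hel i (by omega), hel (i+1) (by omega)]
    conv_lhs => rw [← List.take_append_drop i l]
    rw [List.drop_eq_getElem_cons (l := l) (i := i) (by omega),
        List.drop_eq_getElem_cons (l := l) (i := i+1) (by omega)]
  have hdec2 : ∀ i j, i + 1 < j → j + 1 < l.length →
      l = l.take i ++ el i :: el (i+1) ::
        ((l.drop (i+2)).take (j - (i+2)) ++ el j :: el (j+1) :: l.drop (j+2)) := by
    intro i j hij hj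
    have e2 : (l.drop (i+2)).drop (j-(i+2)) = l.drop j := by
      rw [List.drop_drop]; congr 1; omega
    have e3 : l.drop j = el j :: el (j+1) :: l.drop (j+2) := by
      rw [hel j (by omega), hel (j+1) (by omega)]
      rw [List.drop_eq_getElem_cons (l := l) (i := j) (by omega),
          List.drop_eq_getElem_cons (l := l) (i := j+1) (by omega)]
    have e4 : l.drop (i+2) = (l.drop (i+2)).take (j - (i+2)) ++ el j :: el (j+1) :: l.drop (j+2) := by
      conv_lhs => rw [← List.take_append_drop (j-(i+2)) (l.drop (i+2))]
      rw [e2, e3]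
    rw [← e4]
    exact hdecad i (by omega)
  -- no two consecutive attachments
  have hnc : ∀ i, i + 1 < l.length → el i ∈ X → el (i+1) ∈ X → False := by
    intro i hi h1 h2
    obtain ⟨-, h₁, h₁H, adj₁⟩ := h1
    obtain ⟨-, h₂, h₂H, adj₂⟩ := h2
    obtain ⟨m, hmc, hmne, hmnd, hmH, hmh, hml⟩ := hHpath h₁ h₁H h₂ h₂H
    refine insert_contra hl' hmax (hdecad i hi) hmc hmne hmnd
      (fun w hw => hHl w (hmH w hw)) ?_ ?_
    · intro y hy; rw [hmh] at hy; simp at hy; subst hy; exact adj₁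
    · intro y hy; rw [hml] at hy; simp at hy; subst hy; exact adj₂.symm
  -- path has at least two vertices
  have hlen2 : 2 ≤ l.length := by
    match l, hh, hg with
    | [], hh, hg => simp at hh
    | [a], hh, hg => exfalso; apply huv; simp at hh hg; rw [← hh, ← hg]
    | a :: b :: t, _, _ => simp
  -- some path vertex is not an attachment
  have hz : ∃ z, z ∈ l ∧ z ∉ X := by
    by_contra hno
    push_neg at hno
    exact hnc 0 (by omega) (hno _ (helmem 0 (by omega))) (hno _ (helmem 1 (by omega)))
  obtain ⟨z, hzl, hzX⟩ := hz
  have hh₀X : h₀ ∉ X := fun h => hh₀ h.1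
  have hXl : ∀ w ∈ X, w ∈ l := fun w hw => hw.1
  -- index and successor machinery
  have hidx_lt : ∀ x ∈ l, l.idxOf x < l.length := fun x hx => List.idxOf_lt_length_iff.mpr hx
  have hel_idx : ∀ x ∈ l, el (l.idxOf x) = x := by
    intro x hx
    rw [hel _ (hidx_lt x hx)]
    have := List.idxOf_get (a := x) (l := l) (hidx_lt x hx)
    simpa using this
  have hsucc_lt : ∀ x ∈ X, x ≠ v → l.idxOf x + 1 < l.length := by
    intro x hx hxv
    have h1 := hidx_lt x (hXl x hx)
    by_contra hcon
    have hix : l.idxOf x = l.length - 1 := by omega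
    apply hxv
    have hlne : l ≠ [] := by intro hnil; rw [hnil] at hh; simp at hh
    have hgl := List.getLast?_eq_getLast hlne
    rw [hgl] at hg
    have hvl : v = l.getLast hlne := by simpa using hg.symm
    rw [List.getLast_eq_getElem] at hvl
    have : el (l.idxOf x) = x := hel_idx x (hXl x hx)
    rw [hix, hel _ (by omega)] at this
    rw [← this, hvl]
  set nxt : V → V := fun x => el (l.idxOf x + 1) with hnxtDef
  have hnxt_mem : ∀ x ∈ X, x ≠ v → nxt x ∈ l := fun x hx hxv => helmem _ (hsucc_lt x hx hxv)
  have hnxtX : ∀ x ∈ X, x ≠ v → nxt x ∉ X := by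
    intro x hx hxv hcon
    refine hnc (l.idxOf x) (hsucc_lt x hx hxv) ?_ hcon
    rw [hel_idx x (hXl x hx)]
    exact hx
  have hnxt_inj : ∀ x₁ ∈ X, ∀ x₂ ∈ X, x₁ ≠ v → x₂ ≠ v → nxt x₁ = nxt x₂ → x₁ = x₂ := by
    intro x₁ h1 x₂ h2 hv1 hv2 he
    have := hel_inj _ _ (hsucc_lt x₁ h1 hv1) (hsucc_lt x₂ h2 hv2) he
    have e1 := hel_idx x₁ (hXl x₁ h1)
    have e2 := hel_idx x₂ (hXl x₂ h2)
    rw [← e1, ← e2]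
    congr 1
    omega
  -- ordered rerouting is impossible
  have hkey : ∀ x₁ ∈ X, ∀ x₂ ∈ X, x₁ ≠ v → x₂ ≠ v → l.idxOf x₁ < l.idxOf x₂ →
      G.Adj (nxt x₁) (nxt x₂) → False := by
    intro x₁ h1 x₂ h2 hv1 hv2 hij hadj
    set i := l.idxOf x₁
    set j := l.idxOf x₂
    have hjlt : j + 1 < l.length := hsucc_lt x₂ h2 hv2
    have hij2 : i + 1 < j := by
      rcases Nat.lt_or_ge (i+1) j with h | h
      · exact h
      · exfalso
        have : j = i + 1 := by omega
        apply hnxtX x₁ h1 hv1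
        have : nxt x₁ = x₂ := by
          show el (i + 1) = x₂
          rw [← this]
          exact hel_idx x₂ (hXl x₂ h2)
        rw [this]
        exact h2
    obtain ⟨w₁, w₁H, adj₁⟩ := h1.2
    obtain ⟨w₂, w₂H, adj₂⟩ := h2.2
    obtain ⟨m, hmc, hmne, hmnd, hmH, hmh, hml⟩ := hHpath w₁ w₁H w₂ w₂H
    have hdec := hdec2 i j hij2 hjlt
    rw [hel_idx x₁ (hXl x₁ h1), hel_idx x₂ (hXl x₂ h2)] at hdec
    refine reroute_contra hl' hmax hdec hmc hmne hmnd (fun w hw => hHl w (hmH w hw)) ?_ ?_ hadj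
    · intro y hy; rw [hmh] at hy; simp at hy; subst hy; exact adj₁
    · intro y hy; rw [hml] at hy; simp at hy; subst hy; exact adj₂.symm
  -- now work in G - X
  have hh₀Xc : h₀ ∈ Xᶜ := hh₀X
  -- reachability from h₀ in G - X stays in Hs
  have hreachH : ∀ (w : V) (hw : w ∈ Xᶜ),
      (G.induce Xᶜ).Reachable ⟨h₀, hh₀Xc⟩ ⟨w, hw⟩ → w ∈ Hs := by
    have aux : ∀ (a b : ↥(Xᶜ)) (q : (G.induce Xᶜ).Walk a b), ↑a ∈ Hs → ↑b ∈ Hs := by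
      intro a b q
      induction q with
      | nil => exact id
      | @cons a₁ c₁ b₁ hadj q ih =>
        intro ha
        apply ih
        have hadj' : G.Adj ↑a₁ ↑c₁ := by simpa using hadj
        by_cases hcl : (c₁ : V) ∈ l
        · exact absurd ⟨hcl, ⟨↑a₁, ha, hadj'.symm⟩⟩ c₁.2
        · exact hHnbr ↑a₁ ha ↑c₁ hadj' hcl
    intro w hw hr
    exact aux _ _ hr.some hh₀H
  have hcomp_ne : ∀ (w : V) (hw : w ∈ Xᶜ), w ∈ l →
      (G.induce Xᶜ).connectedComponentMk ⟨w, hw⟩ ≠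
      (G.induce Xᶜ).connectedComponentMk ⟨h₀, hh₀Xc⟩ := by
    intro w hw hwl heq
    have hr := SimpleGraph.ConnectedComponent.exact heq
    exact hHl w (hreachH w hw hr.symm) hwl
  haveI : Fintype (G.induce Xᶜ).ConnectedComponent := Fintype.ofFinite _
  have h2comp : 2 ≤ numComp G X := by
    unfold numComp
    rw [Nat.card_eq_fintype_card]
    refine Fintype.one_lt_card_iff_nontrivial.mpr
      ⟨⟨(G.induce Xᶜ).connectedComponentMk ⟨z, hzX⟩,
        (G.induce Xᶜ).connectedComponentMk ⟨h₀, hh₀Xc⟩, hcomp_ne z hzX hzl⟩⟩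
  have hlt := htough X h2comp
  -- build the injection
  set Y := ↥(X \ {v}) with hYDef
  haveI : Fintype Y := Fintype.ofFinite _
  have hYmem : ∀ y : Y, y.1 ∈ X ∧ y.1 ≠ v := fun y => y.2
  have hnxtXc : ∀ y : Y, nxt y.1 ∈ Xᶜ := fun y => hnxtX y.1 (hYmem y).1 (hYmem y).2
  set f : Option Y → (G.induce Xᶜ).ConnectedComponent :=
    fun o => o.elim ((G.induce Xᶜ).connectedComponentMk ⟨h₀, hh₀Xc⟩)
      (fun y => (G.induce Xᶜ).connectedComponentMk ⟨nxt y.1, hnxtXc y⟩) with hfDef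
  have hfinj : Function.Injective f := by
    intro o₁ o₂ heq
    match o₁, o₂ with
    | none, none => rfl
    | none, some y =>
      exact absurd heq.symm (hcomp_ne (nxt y.1) (hnxtXc y) (hnxt_mem y.1 (hYmem y).1 (hYmem y).2))
    | some y, none =>
      exact absurd heq (hcomp_ne (nxt y.1) (hnxtXc y) (hnxt_mem y.1 (hYmem y).1 (hYmem y).2))
    | some y₁, some y₂ =>
      rw [hfDef] at heq
      simp only [Option.elim] at heq
      by_cases hnn : nxt y₁.1 = nxt y₂.1
      · have := hnxt_inj y₁.1 (hYmem y₁).1 y₂.1 (hYmem y₂).1 (hYmem y₁).2 (hYmem y₂).2 hnn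
        congr 1
        exact Subtype.ext this
      · exfalso
        have hadj : G.Adj (nxt y₁.1) (nxt y₂.1) := by
          refine cliquey hfree (S := X) (a := ⟨nxt y₁.1, hnxtXc y₁⟩) (b := ⟨nxt y₂.1, hnxtXc y₂⟩)
            (c := ⟨h₀, hh₀Xc⟩) (SimpleGraph.ConnectedComponent.exact heq) ?_ ?_
          · intro hr
            exact hHl _ (hreachH _ (hnxtXc y₁) hr.symm)
              (hnxt_mem y₁.1 (hYmem y₁).1 (hYmem y₁).2)
          · intro hcon
            exact hnn (congrArg Subtype.val hcon)
        have hne_idx : l.idxOf y₁.1 ≠ l.idxOf y₂.1 := by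
          intro hid
          apply hnn
          show el (l.idxOf y₁.1 + 1) = el (l.idxOf y₂.1 + 1)
          rw [hid]
        rcases Nat.lt_or_ge (l.idxOf y₁.1) (l.idxOf y₂.1) with h | h
        · exact hkey y₁.1 (hYmem y₁).1 y₂.1 (hYmem y₂).1 (hYmem y₁).2 (hYmem y₂).2 h hadj
        · exact hkey y₂.1 (hYmem y₂).1 y₁.1 (hYmem y₁).1 (hYmem y₂).2 (hYmem y₁).2
            (by omega) hadj.symm
  -- counting
  have hcard1 : Nat.card (Option Y) ≤ Nat.card (G.induce Xᶜ).ConnectedComponent :=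
    Nat.card_le_card_of_injective f hfinj
  have hcard2 : Nat.card (Option Y) = (X \ {v}).ncard + 1 := by
    rw [Nat.card_eq_fintype_card, Fintype.card_option]
    congr 1
    rw [← Nat.card_coe_set_eq, Nat.card_eq_fintype_card]
  have hcard3 : X.ncard ≤ (X \ {v}).ncard + 1 := by
    by_cases hv : v ∈ X
    · rw [Set.ncard_diff_singleton_add_one hv (Set.toFinite X)]
    · rw [Set.diff_singleton_eq_self hv]
      omega
  have hfinal : X.ncard ≤ numComp G X := by
    unfold numComp
    omega
  omega
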